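/- (Krawtchouk orthogonality) For all n, m ∈ {0,1,…,N}: Σ_{i=0}^{N} K_n(i)·K_m(i)·C(N,i)·pⁱ·(1−p)^{N−i} = δ_{n,m}·C(N,n)⁻¹·((1−p)/p)ⁿ, where δ_{n,m} is the Kronecker delta and C(N,n) is invertible in F by feasibility of N. -/

import Mathlib

open Finset


private lemma sum_shift {M : Type*} [AddCommMonoid M] (f : ℕ → M) (s N : ℕ) (hs : s ≤ N)
    (hf : ∀ t, t < s → f t = 0) :
    ∑ t ∈ Finset.range (N + 1), f t = ∑ u ∈ Finset.range (N - s + 1), f (s + u) := by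
  have h1 : ∑ t ∈ Finset.range (N + 1), f t = ∑ t ∈ Finset.Ico s (N + 1), f t := by
    refine (Finset.sum_subset ?_ ?_).symm
    · intro x hx; simp only [Finset.mem_Ico, Finset.mem_range] at *; omega
    · intro x hx hx2; apply hf; simp only [Finset.mem_Ico, Finset.mem_range] at *; omega
  rw [h1, Finset.sum_Ico_eq_sum_range]
  have h2 : N + 1 - s = N - s + 1 := by omega
  rw [h2]

private lemma choose_succ_int (i k : ℕ) :
    (i.choose (k + 1) : ℤ) * (k + 1) = i.choose k * ((i : ℤ) - k) := by
  rcases le_or_gt k i with h | h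
  · have h2 := Nat.choose_succ_right_eq i k
    have hc : ((i - k : ℕ) : ℤ) = (i : ℤ) - k := by
      push_cast [h]; ring
    rw [← hc]; exact_mod_cast h2
  · rw [Nat.choose_eq_zero_of_lt h, Nat.choose_eq_zero_of_lt (by omega)]; simp

private lemma poch_eval (F : Type*) [Field F] (i k : ℕ) :
    (ascPochhammer F k).eval (-(i : F)) = (-1) ^ k * ((i.choose k * k.factorial : ℕ) : F) := by
  induction k with
  | zero => simp
  | succ k ih =>
    rw [ascPochhammer_succ_eval, ih]
    have h := choose_succ_int i k
    have hF : (i.choose (k + 1) : F) * (k + 1) = (i.choose k : F) * ((i : F) - k) := by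
      exact_mod_cast congrArg (fun z : ℤ => (z : F)) h
    simp only [Nat.factorial_succ]
    push_cast
    linear_combination ((-1 : F)) ^ k * (k.factorial : F) * hF

private lemma fact_ne {F : Type*} [Field F] {N : ℕ} (hN : (N.factorial : F) ≠ 0)
    {k : ℕ} (hk : k ≤ N) : (k.factorial : F) ≠ 0 := by
  obtain ⟨c, hc⟩ := Nat.factorial_dvd_factorial hk
  intro h0
  apply hN
  rw [hc]; push_cast; rw [h0]; ring

private lemma choose_ne {F : Type*} [Field F] {N : ℕ} (hN : (N.factorial : F) ≠ 0)
    {k : ℕ} (hk : k ≤ N) : (N.choose k : F) ≠ 0 := by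
  have h := Nat.choose_mul_factorial_mul_factorial hk
  intro h0
  apply hN
  rw [← h]; push_cast; rw [h0]; ring


/-- The Krawtchouk polynomial value
`K_i(j) = Σ_{n=0}^{N} (−i)_n (−j)_n / ((−N)_n · n! · pⁿ)`, computed in the field `F`,
where `(α)_n` is the shifted factorial (ascending Pochhammer symbol). -/
noncomputable def kraw (F : Type*) [Field F] (p : F) (N i j : ℕ) : F :=
  ∑ n ∈ Finset.range (N + 1),
    ((ascPochhammer F n).eval (-(i : F)) * (ascPochhammer F n).eval (-(j : F))) /
      ((ascPochhammer F n).eval (-(N : F)) * (n.factorial : F) * p ^ n)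

private lemma kraw_eq {F : Type*} [Field F] {N : ℕ} (hN : (N.factorial : F) ≠ 0)
    {p : F} (hp0 : p ≠ 0) (a b : ℕ) :
    kraw F p N a b = ∑ t ∈ Finset.range (N + 1),
      (-1) ^ t * (a.choose t : F) * (b.choose t : F) / ((N.choose t : F) * p ^ t) := by
  unfold kraw
  refine Finset.sum_congr rfl fun t ht => ?_
  rw [Finset.mem_range] at ht
  have ht' : t ≤ N := by omega
  rw [poch_eval, poch_eval, poch_eval]
  have h1 : (t.factorial : F) ≠ 0 := fact_ne hN ht'
  have h2 : (N.choose t : F) ≠ 0 := choose_ne hN ht'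
  have h3 : p ^ t ≠ 0 := pow_ne_zero _ hp0
  have h4 : ((-1 : F)) ^ t ≠ 0 := pow_ne_zero _ (by norm_num)
  push_cast
  field_simp

private lemma lemB {F : Type*} [Field F] (p : F) (M s : ℕ) :
    ∑ t ∈ Finset.range (M + 1),
      (M.choose t : F) * (t.choose s : F) * p ^ t * (1 - p) ^ (M - t)
      = (M.choose s : F) * p ^ s := by
  rcases le_or_gt s M with hs | hs
  · rw [sum_shift _ s M hs (by
      intro t ht
      rw [Nat.choose_eq_zero_of_lt ht]; simp)]
    have key : ∀ u ∈ Finset.range (M - s + 1),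
        (M.choose (s + u) : F) * ((s + u).choose s : F) * p ^ (s + u) * (1 - p) ^ (M - (s + u))
        = (M.choose s : F) * p ^ s * ((p) ^ u * (1 - p) ^ (M - s - u) * ((M - s).choose u : F)) := by
      intro u hu
      rw [Finset.mem_range] at hu
      have h1 : s + u ≤ M := by omega
      have h2 := Nat.choose_mul (n := M) (Nat.le_add_right s u)
      rw [Nat.add_sub_cancel_left] at h2
      have h2F : (M.choose (s + u) : F) * ((s + u).choose s : F)
          = (M.choose s : F) * ((M - s).choose u : F) := by
        have := congrArg (fun x : ℕ => (x : F)) h2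
        push_cast at this
        exact this
      have h3 : M - (s + u) = M - s - u := by omega
      rw [h3, pow_add]
      linear_combination p ^ s * p ^ u * (1 - p) ^ (M - s - u) * h2F
    rw [Finset.sum_congr rfl key, ← Finset.mul_sum, ← add_pow]
    norm_num
  · have h0 : (M.choose s : F) = 0 := by rw [Nat.choose_eq_zero_of_lt hs]; simp
    rw [h0, zero_mul]
    refine Finset.sum_eq_zero fun t ht => ?_
    rw [Finset.mem_range] at ht
    rw [Nat.choose_eq_zero_of_lt (show t < s by omega)]
    simp

private lemma vand (a b k : ℕ) :
    (a + b).choose k = ∑ j ∈ Finset.range (k + 1), a.choose j * b.choose (k - j) := by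
  rw [Nat.add_choose_eq, Finset.Nat.sum_antidiagonal_eq_sum_range_succ_mk]

private lemma lemT {F : Type*} [Field F] (p : F) {N l : ℕ} (hl : l ≤ N) (k : ℕ) :
    ∑ i ∈ Finset.range (N + 1),
      (N.choose i : F) * (i.choose l : F) * (i.choose k : F) * p ^ i * (1 - p) ^ (N - i)
      = (N.choose l : F) * p ^ l *
        ∑ j ∈ Finset.range (k + 1), (l.choose j : F) * ((N - l).choose (k - j) : F) * p ^ (k - j) := by
  rw [sum_shift _ l N hl (by
    intro t ht
    rw [Nat.choose_eq_zero_of_lt ht]; simp)]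
  have key : ∀ u ∈ Finset.range (N - l + 1),
      (N.choose (l + u) : F) * ((l + u).choose l : F) * ((l + u).choose k : F) * p ^ (l + u) *
          (1 - p) ^ (N - (l + u))
      = (N.choose l : F) * p ^ l * ∑ j ∈ Finset.range (k + 1),
          (l.choose j : F) * ((((N - l).choose u : F) * ((u).choose (k - j) : F) * p ^ u *
            (1 - p) ^ (N - l - u))) := by
    intro u hu
    rw [Finset.mem_range] at hu
    have h1 : l + u ≤ N := by omega
    have h2 := Nat.choose_mul (n := N) (Nat.le_add_right l u)
    rw [Nat.add_sub_cancel_left] at h2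
    have h2F : (N.choose (l + u) : F) * ((l + u).choose l : F)
        = (N.choose l : F) * ((N - l).choose u : F) := by
      have := congrArg (fun x : ℕ => (x : F)) h2
      push_cast at this
      exact this
    have h3 : N - (l + u) = N - l - u := by omega
    have h4 : ((l + u).choose k : F) = ∑ j ∈ Finset.range (k + 1),
        (l.choose j : F) * (u.choose (k - j) : F) := by
      rw [vand]; push_cast; rfl
    rw [h3, h4, pow_add]
    simp only [Finset.mul_sum, Finset.sum_mul]
    refine Finset.sum_congr rfl fun j hj => ?_
    linear_combination (↑(l.choose j) * ↑(u.choose (k - j)) * p ^ l * p ^ u *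
      (1 - p) ^ (N - l - u)) * h2F
  rw [Finset.sum_congr rfl key, ← Finset.mul_sum, Finset.sum_comm]
  congr 1
  refine Finset.sum_congr rfl fun j hj => ?_
  rw [← Finset.mul_sum]
  have := lemB p (N - l) (k - j)
  -- inner sum over u equals ((N-l).choose (k-j)) * p^(k-j)
  have h5 : ∑ u ∈ Finset.range (N - l + 1),
      ((N - l).choose u : F) * (u.choose (k - j) : F) * p ^ u * (1 - p) ^ (N - l - u)
      = ((N - l).choose (k - j) : F) * p ^ (k - j) := lemB p (N - l) (k - j)
  calc (l.choose j : F) * ∑ u ∈ Finset.range (N - l + 1),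
        ((N - l).choose u : F) * (u.choose (k - j) : F) * p ^ u * (1 - p) ^ (N - l - u)
      = (l.choose j : F) * (((N - l).choose (k - j) : F) * p ^ (k - j)) := by rw [h5]
    _ = (l.choose j : F) * ((N - l).choose (k - j) : F) * p ^ (k - j) := by ring

private lemma lemD : ∀ (a b c : ℕ), a ≤ b →
    ∑ u ∈ Finset.range (a + 1), (-1 : ℤ) ^ u * (a.choose u) * ((b - u).choose c)
      = if a ≤ c then ((b - a).choose (c - a) : ℤ) else 0 := by
  intro a
  induction a with
  | zero => intro b c _; simp
  | succ a ih =>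
    intro b c hab
    have hD : ∑ u ∈ Finset.range (a + 1 + 1), (-1 : ℤ) ^ u * ((a + 1).choose u) * ((b - u).choose c)
        = (∑ u ∈ Finset.range (a + 1), (-1 : ℤ) ^ u * (a.choose u) * ((b - u).choose c))
          - ∑ u ∈ Finset.range (a + 1), (-1 : ℤ) ^ u * (a.choose u) * ((b - 1 - u).choose c) := by
      rw [Finset.sum_range_succ' _ (a + 1)]
      have hsplit : ∀ u ∈ Finset.range (a + 1),
          (-1 : ℤ) ^ (u + 1) * ((a + 1).choose (u + 1)) * ((b - (u + 1)).choose c)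
          = (-1 : ℤ) ^ (u + 1) * (a.choose (u + 1)) * ((b - (u + 1)).choose c)
            + (-(-1 : ℤ) ^ u) * (a.choose u) * ((b - 1 - u).choose c) := by
        intro u hu
        have h1 : (a + 1).choose (u + 1) = a.choose u + a.choose (u + 1) := Nat.choose_succ_succ' a u
        have h2 : b - (u + 1) = b - 1 - u := by omega
        rw [h1, h2]
        push_cast
        ring
      rw [Finset.sum_congr rfl hsplit, Finset.sum_add_distrib]
      have h3 : ∑ u ∈ Finset.range (a + 1),
          (-1 : ℤ) ^ (u + 1) * (a.choose (u + 1)) * ((b - (u + 1)).choose c)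
          = (∑ u ∈ Finset.range (a + 1), (-1 : ℤ) ^ u * (a.choose u) * ((b - u).choose c))
            - (-1 : ℤ) ^ 0 * (a.choose 0) * ((b - 0).choose c) := by
        rw [eq_sub_iff_add_eq, ← Finset.sum_range_succ' (fun u => (-1 : ℤ) ^ u * (a.choose u) * ((b - u).choose c)) (a + 1)]
        rw [Finset.sum_range_succ]
        rw [Nat.choose_eq_zero_of_lt (by omega : a < a + 1)]
        push_cast
        ring
      rw [h3]
      have h4 : ∑ u ∈ Finset.range (a + 1),
          (-(-1 : ℤ) ^ u) * (a.choose u) * ((b - 1 - u).choose c)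
          = - ∑ u ∈ Finset.range (a + 1), (-1 : ℤ) ^ u * (a.choose u) * ((b - 1 - u).choose c) := by
        rw [← Finset.sum_neg_distrib]
        exact Finset.sum_congr rfl fun u _ => by ring
      rw [h4]
      simp
      ring
    rw [hD, ih b c (by omega), ih (b - 1) c (by omega)]
    rcases le_or_gt (a + 1) c with hc | hc
    · simp only [if_pos hc, if_pos (show a ≤ c by omega)]
      have e1 : b - a = (b - (a + 1)) + 1 := by omega
      have e2 : c - a = (c - (a + 1)) + 1 := by omega
      have e3 : b - 1 - a = b - (a + 1) := by omega
      rw [e1, e2, e3, Nat.choose_succ_succ]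
      push_cast
      ring
    · rcases le_or_gt a c with hc2 | hc2
      · -- c = a
        simp only [if_neg (show ¬ (a + 1 ≤ c) by omega), if_pos (show a ≤ c by omega)]
        have e1 : c - a = 0 := by omega
        rw [e1]
        simp
      · simp only [if_neg (show ¬ (a + 1 ≤ c) by omega), if_neg (show ¬ (a ≤ c) by omega)]
        ring

private lemma lemL {n N k j : ℕ} (hn : n ≤ N) (hj : j ≤ k) :
    ∑ l ∈ Finset.range (N + 1),
      (-1 : ℤ) ^ l * (n.choose l) * (l.choose j) * ((N - l).choose (k - j))
      = (-1) ^ j * (n.choose j) * (if n ≤ k then ((N - n).choose (k - n) : ℤ) else 0) := by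
  rcases le_or_gt j n with hjn | hjn
  · rw [sum_shift _ j N (by omega) (by
      intro t ht
      rw [Nat.choose_eq_zero_of_lt ht]
      push_cast; ring)]
    have key : ∀ v ∈ Finset.range (N - j + 1),
        (-1 : ℤ) ^ (j + v) * (n.choose (j + v)) * ((j + v).choose j) * ((N - (j + v)).choose (k - j))
        = ((-1) ^ j * (n.choose j)) *
          ((-1 : ℤ) ^ v * ((n - j).choose v) * (((N - j) - v).choose (k - j))) := by
      intro v hv
      rcases le_or_gt (j + v) n with h1 | h1
      · have h2 := Nat.choose_mul (n := n) (Nat.le_add_right j v)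
        rw [Nat.add_sub_cancel_left] at h2
        have h2Z : ((n.choose (j + v)) : ℤ) * ((j + v).choose j)
            = (n.choose j : ℤ) * ((n - j).choose v) := by exact_mod_cast congrArg (Nat.cast (R := ℤ)) h2
        have h3 : N - (j + v) = (N - j) - v := by omega
        rw [h3, pow_add]
        linear_combination ((-1 : ℤ) ^ j * (-1 : ℤ) ^ v * (((N - j) - v).choose (k - j) : ℤ)) * h2Z
      · rw [Nat.choose_eq_zero_of_lt h1, Nat.choose_eq_zero_of_lt (show n - j < v by omega)]
        push_cast; ring
    rw [Finset.sum_congr rfl key, ← Finset.mul_sum]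
    have htr : ∑ v ∈ Finset.range (N - j + 1),
        (-1 : ℤ) ^ v * ((n - j).choose v) * (((N - j) - v).choose (k - j))
        = ∑ v ∈ Finset.range (n - j + 1),
          (-1 : ℤ) ^ v * ((n - j).choose v) * (((N - j) - v).choose (k - j)) := by
      refine (Finset.sum_subset (Finset.range_subset_range.mpr (by omega)) ?_).symm
      intro x hx hx2
      rw [Finset.mem_range] at hx hx2
      rw [Nat.choose_eq_zero_of_lt (show n - j < x by omega)]
      push_cast; ring
    rw [htr]
    have hD := lemD (n - j) (N - j) (k - j) (by omega)
    rw [hD]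
    have e1 : (N - j) - (n - j) = N - n := by omega
    rw [e1]
    congr 1
    rcases le_or_gt n k with hnk | hnk
    · rw [if_pos (by omega), if_pos hnk]
      have e2 : (k - j) - (n - j) = k - n := by omega
      rw [e2]
    · rw [if_neg (by omega), if_neg (by omega)]
  · rw [Nat.choose_eq_zero_of_lt hjn]
    push_cast
    rw [Finset.sum_eq_zero, ]
    · ring
    intro l hl
    rcases le_or_gt l n with h1 | h1
    · rw [Nat.choose_eq_zero_of_lt (show l < j by omega)]
      push_cast; ring
    · rw [Nat.choose_eq_zero_of_lt h1]
      push_cast; ring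

private lemma lemU {F : Type*} [Field F] {N : ℕ} (hN : (N.factorial : F) ≠ 0)
    {p : F} (hp0 : p ≠ 0) {n k : ℕ} (hn : n ≤ N) (hk : k ≤ N) :
    ∑ i ∈ Finset.range (N + 1),
      kraw F p N n i * ((N.choose i : F) * (i.choose k : F) * p ^ i * (1 - p) ^ (N - i))
      = (if n ≤ k then ((N - n).choose (k - n) : F) else 0) * p ^ (k - n) * (p - 1) ^ n := by
  have step0 : ∀ i ∈ Finset.range (N + 1),
      kraw F p N n i * ((N.choose i : F) * (i.choose k : F) * p ^ i * (1 - p) ^ (N - i))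
      = ∑ l ∈ Finset.range (N + 1),
          ((-1) ^ l * (n.choose l : F) * (i.choose l : F) / ((N.choose l : F) * p ^ l)) *
            ((N.choose i : F) * (i.choose k : F) * p ^ i * (1 - p) ^ (N - i)) := by
    intro i _
    rw [kraw_eq hN hp0, Finset.sum_mul]
  rw [Finset.sum_congr rfl step0, Finset.sum_comm]
  have step1 : ∀ l ∈ Finset.range (N + 1),
      ∑ i ∈ Finset.range (N + 1),
        ((-1) ^ l * (n.choose l : F) * (i.choose l : F) / ((N.choose l : F) * p ^ l)) *
          ((N.choose i : F) * (i.choose k : F) * p ^ i * (1 - p) ^ (N - i))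
      = (-1) ^ l * (n.choose l : F) *
          ∑ j ∈ Finset.range (k + 1),
            (l.choose j : F) * ((N - l).choose (k - j) : F) * p ^ (k - j) := by
    intro l hl
    rw [Finset.mem_range] at hl
    have hl' : l ≤ N := by omega
    have h1 : ∑ i ∈ Finset.range (N + 1),
        ((-1) ^ l * (n.choose l : F) * (i.choose l : F) / ((N.choose l : F) * p ^ l)) *
          ((N.choose i : F) * (i.choose k : F) * p ^ i * (1 - p) ^ (N - i))
        = ((-1) ^ l * (n.choose l : F) / ((N.choose l : F) * p ^ l)) *
          ∑ i ∈ Finset.range (N + 1),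
            (N.choose i : F) * (i.choose l : F) * (i.choose k : F) * p ^ i * (1 - p) ^ (N - i) := by
      rw [Finset.mul_sum]
      exact Finset.sum_congr rfl fun i _ => by ring
    rw [h1, lemT p hl' k]
    have h2 : (N.choose l : F) ≠ 0 := choose_ne hN hl'
    have h3 : p ^ l ≠ 0 := pow_ne_zero _ hp0
    field_simp
  rw [Finset.sum_congr rfl step1]
  have step2 : ∀ l ∈ Finset.range (N + 1),
      (-1 : F) ^ l * (n.choose l : F) *
        ∑ j ∈ Finset.range (k + 1),
          (l.choose j : F) * ((N - l).choose (k - j) : F) * p ^ (k - j)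
      = ∑ j ∈ Finset.range (k + 1),
          ((-1 : F) ^ l * (n.choose l : F) * (l.choose j : F) * ((N - l).choose (k - j) : F))
            * p ^ (k - j) := by
    intro l _
    rw [Finset.mul_sum]
    exact Finset.sum_congr rfl fun j _ => by ring
  rw [Finset.sum_congr rfl step2, Finset.sum_comm]
  have step3 : ∀ j ∈ Finset.range (k + 1),
      ∑ l ∈ Finset.range (N + 1),
        ((-1 : F) ^ l * (n.choose l : F) * (l.choose j : F) * ((N - l).choose (k - j) : F))
          * p ^ (k - j)
      = ((-1 : F) ^ j * (n.choose j : F) *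
          (if n ≤ k then ((N - n).choose (k - n) : F) else 0)) * p ^ (k - j) := by
    intro j hj
    rw [Finset.mem_range] at hj
    rw [← Finset.sum_mul]
    congr 1
    have hZ := lemL (n := n) (N := N) (k := k) (j := j) hn (by omega)
    have hF := congrArg (fun z : ℤ => (z : F)) hZ
    push_cast at hF
    exact_mod_cast hF
  rw [Finset.sum_congr rfl step3]
  rcases le_or_gt n k with hnk | hnk
  · simp only [if_pos hnk]
    have step4 : ∀ j ∈ Finset.range (k + 1),
        (-1 : F) ^ j * (n.choose j : F) * ((N - n).choose (k - n) : F) * p ^ (k - j)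
        = ((N - n).choose (k - n) : F) *
            ((-1 : F) ^ j * (n.choose j : F) * p ^ (k - j)) := by
      intro j _; ring
    rw [Finset.sum_congr rfl step4, ← Finset.mul_sum]
    have htr : ∑ j ∈ Finset.range (k + 1), (-1 : F) ^ j * (n.choose j : F) * p ^ (k - j)
        = ∑ j ∈ Finset.range (n + 1), (-1 : F) ^ j * (n.choose j : F) * p ^ (k - j) := by
      refine (Finset.sum_subset (Finset.range_subset_range.mpr (by omega)) ?_).symm
      intro x hx hx2
      rw [Finset.mem_range] at hx hx2
      rw [Nat.choose_eq_zero_of_lt (show n < x by omega)]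
      push_cast; ring
    rw [htr]
    have step5 : ∀ j ∈ Finset.range (n + 1),
        (-1 : F) ^ j * (n.choose j : F) * p ^ (k - j)
        = p ^ (k - n) * ((-1 : F) ^ j * p ^ (n - j) * (n.choose j : F)) := by
      intro j hj
      rw [Finset.mem_range] at hj
      have e : k - j = (k - n) + (n - j) := by omega
      rw [e, pow_add]
      ring
    rw [Finset.sum_congr rfl step5, ← Finset.mul_sum, ← add_pow]
    ring_nf
  · simp only [if_neg (show ¬ n ≤ k by omega)]
    rw [Finset.sum_eq_zero]
    · ring
    intro j _
    ring

private lemma lemE {n m N : ℕ} (hm : m ≤ N) :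
    ∑ k ∈ Finset.range (N + 1), (-1 : ℤ) ^ k * (m.choose k) * (k.choose n)
      = if n = m then (-1 : ℤ) ^ n else 0 := by
  rcases le_or_gt n m with hnm | hnm
  · rw [sum_shift _ n N (by omega) (by
      intro t ht
      rw [Nat.choose_eq_zero_of_lt ht]
      push_cast; ring)]
    have key : ∀ v ∈ Finset.range (N - n + 1),
        (-1 : ℤ) ^ (n + v) * (m.choose (n + v)) * ((n + v).choose n)
        = ((-1 : ℤ) ^ n * (m.choose n)) * ((-1 : ℤ) ^ v * ((m - n).choose v)) := by
      intro v _
      rcases le_or_gt (n + v) m with h1 | h1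
      · have h2 := Nat.choose_mul (n := m) (Nat.le_add_right n v)
        rw [Nat.add_sub_cancel_left] at h2
        have h2Z : ((m.choose (n + v)) : ℤ) * ((n + v).choose n)
            = (m.choose n : ℤ) * ((m - n).choose v) := by exact_mod_cast congrArg (Nat.cast (R := ℤ)) h2
        rw [pow_add]
        linear_combination ((-1 : ℤ) ^ n * (-1 : ℤ) ^ v) * h2Z
      · rw [Nat.choose_eq_zero_of_lt h1, Nat.choose_eq_zero_of_lt (show m - n < v by omega)]
        push_cast; ring
    rw [Finset.sum_congr rfl key, ← Finset.mul_sum]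
    have htr : ∑ v ∈ Finset.range (N - n + 1), (-1 : ℤ) ^ v * ((m - n).choose v)
        = ∑ v ∈ Finset.range ((m - n) + 1), (-1 : ℤ) ^ v * ((m - n).choose v) := by
      refine (Finset.sum_subset (Finset.range_subset_range.mpr (by omega)) ?_).symm
      intro x hx hx2
      rw [Finset.mem_range] at hx hx2
      rw [Nat.choose_eq_zero_of_lt (show m - n < x by omega)]
      push_cast; ring
    rw [htr, Int.alternating_sum_range_choose]
    rcases eq_or_lt_of_le hnm with h | h
    · rw [if_pos (by omega), if_pos h]
      rw [← h, Nat.choose_self]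
      push_cast; ring
    · rw [if_neg (by omega), if_neg (by omega)]
      ring
  · rw [if_neg (by omega), Finset.sum_eq_zero]
    intro k hk
    rcases le_or_gt k m with h1 | h1
    · rw [Nat.choose_eq_zero_of_lt (show k < n by omega)]
      push_cast; ring
    · rw [Nat.choose_eq_zero_of_lt h1]
      push_cast; ring

/-- Krawtchouk orthogonality: for `0 ≤ n, m ≤ N`,
`Σ_{i=0}^{N} K_n(i) K_m(i) C(N,i) pⁱ (1−p)^{N−i} = δ_{nm} C(N,n)⁻¹ ((1−p)/p)ⁿ`.
Feasibility of `N` is encoded by `(N! : F) ≠ 0`. -/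
theorem stmt12 (F : Type*) [Field F] (hchar : (2 : F) ≠ 0)
    (N : ℕ) (hN : (N.factorial : F) ≠ 0)
    (p : F) (hp0 : p ≠ 0) (hp1 : p ≠ 1)
    (n m : ℕ) (hn : n ≤ N) (hm : m ≤ N) :
    ∑ i ∈ Finset.range (N + 1),
        kraw F p N n i * kraw F p N m i * (N.choose i : F) * p ^ i * (1 - p) ^ (N - i)
      = (if n = m then 1 else 0) * ((N.choose n : F))⁻¹ * ((1 - p) / p) ^ n := by
  have hCn : (N.choose n : F) ≠ 0 := choose_ne hN hn
  have step0 : ∀ i ∈ Finset.range (N + 1),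
      kraw F p N n i * kraw F p N m i * (N.choose i : F) * p ^ i * (1 - p) ^ (N - i)
      = ∑ k ∈ Finset.range (N + 1),
          ((-1) ^ k * (m.choose k : F) / ((N.choose k : F) * p ^ k)) *
            (kraw F p N n i *
              ((N.choose i : F) * (i.choose k : F) * p ^ i * (1 - p) ^ (N - i))) := by
    intro i _
    rw [kraw_eq hN hp0 m i]
    rw [Finset.mul_sum, Finset.sum_mul, Finset.sum_mul, Finset.sum_mul]
    exact Finset.sum_congr rfl fun k _ => by ring
  rw [Finset.sum_congr rfl step0, Finset.sum_comm]
  have step1 : ∀ k ∈ Finset.range (N + 1),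
      ∑ i ∈ Finset.range (N + 1),
        ((-1) ^ k * (m.choose k : F) / ((N.choose k : F) * p ^ k)) *
          (kraw F p N n i *
            ((N.choose i : F) * (i.choose k : F) * p ^ i * (1 - p) ^ (N - i)))
      = ((p - 1) ^ n / ((N.choose n : F) * p ^ n)) *
          ((-1) ^ k * (m.choose k : F) * (k.choose n : F)) := by
    intro k hk
    rw [Finset.mem_range] at hk
    have hk' : k ≤ N := by omega
    rw [← Finset.mul_sum, lemU hN hp0 hn hk']
    have hCk : (N.choose k : F) ≠ 0 := choose_ne hN hk'
    rcases le_or_gt n k with hnk | hnk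
    · rw [if_pos hnk]
      have h2 := Nat.choose_mul (n := N) hnk
      have h2F : (N.choose k : F) * (k.choose n : F)
          = (N.choose n : F) * ((N - n).choose (k - n) : F) := by
        have := congrArg (fun x : ℕ => (x : F)) h2
        push_cast at this
        exact this
      have e : p ^ k = p ^ (k - n) * p ^ n := by
        rw [← pow_add]
        congr 1
        omega
      field_simp
      rw [e]
      linear_combination (-(m.choose k : F) * p ^ (k - n) * p ^ n) * h2F
    · rw [if_neg (by omega), Nat.choose_eq_zero_of_lt hnk]
      push_cast
      ring
  rw [Finset.sum_congr rfl step1, ← Finset.mul_sum]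
  have hEF : ∑ k ∈ Finset.range (N + 1), (-1 : F) ^ k * (m.choose k : F) * (k.choose n : F)
      = if n = m then (-1 : F) ^ n else 0 := by
    have hZ := lemE (n := n) (hm := hm)
    have hF := congrArg (fun z : ℤ => (z : F)) hZ
    push_cast at hF
    exact_mod_cast hF
  rw [hEF]
  rcases eq_or_ne n m with h | h
  · rw [if_pos h, if_pos h]
    rw [div_pow]
    field_simp
    rw [← mul_pow]
    congr 1
    ring
  · rw [if_neg h, if_neg h]
    ring
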